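/- Let K₂ be the complete simple graph on two vertices. There is no simple loopless graph E together with a strict homomorphism ev : E × K₂ → K₂ such that for every simple loopless graph X and every strict homomorphism g : X × K₂ → K₂ there exists a unique strict homomorphism ḡ : X → E with ev ∘ (ḡ × id) = g, where ḡ × id : X × K₂ → E × K₂ is the strict homomorphism sending (x, a) to (ḡ x, a). That is, the exponential of K₂ by K₂ with evaluation does not exist in SiLlStGrphs. -/

import Mathlib

/-- The categorical product of simple loopless graphs: `(a,b)` is adjacent to
`(c,d)` iff `a ~ c` in `G` and `b ~ d` in `H`. -/
def catProd {V W : Type} (G : SimpleGraph V) (H : SimpleGraph W) :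
    SimpleGraph (V × W) where
  Adj p q := G.Adj p.1 q.1 ∧ H.Adj p.2 q.2
  symm := ⟨fun _ _ h => ⟨h.1.symm, h.2.symm⟩⟩
  loopless := ⟨fun p h => G.irrefl h.1⟩

/-- `K₂`, the complete simple graph on two vertices. -/
def K2 : SimpleGraph (Fin 2) := ⊤

/-- Given a strict homomorphism `f : G → E`, the strict homomorphism
`f × id : G × K₂ → E × K₂` sending `(x, a)` to `(f x, a)`. -/
def prodWithIdK2 {V W : Type} {G : SimpleGraph V} {E : SimpleGraph W}
    (f : G →g E) : catProd G K2 →g catProd E K2 where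
  toFun p := (f p.1, p.2)
  map_rel' := fun h => ⟨f.map_rel h.1, h.2⟩

/-- The exponential of `K₂` by `K₂` with evaluation does not exist in
**SiLlStGrphs**: there is no simple loopless graph `E` with a strict
homomorphism `ev : E × K₂ → K₂` such that every strict homomorphism
`g : X × K₂ → K₂` factors as `g = ev ∘ (ḡ × id)` for a unique strict
homomorphism `ḡ : X → E`. -/
theorem no_exponentiation_SiLlStGrphs :
    ¬ ∃ (VE : Type) (E : SimpleGraph VE) (ev : catProd E K2 →g K2),
        ∀ (VX : Type) (X : SimpleGraph VX) (g : catProd X K2 →g K2),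
          ∃! gb : X →g E, ev.comp (prodWithIdK2 gb) = g := by

  rintro ⟨VE, E, ev, hP⟩
  -- one-vertex graph: forces a unique vertex `e` with `ev (e, a) = a`
  let g0 : catProd (⊥ : SimpleGraph Unit) K2 →g K2 :=
    ⟨fun p => p.2, fun {p q} h => absurd h.1 (by simp [catProd])⟩
  obtain ⟨gb0, hgb0, huniq0⟩ := hP Unit ⊥ g0
  have hev0 : ∀ a, ev (gb0 (), a) = a := fun a => DFunLike.congr_fun hgb0 ((), a)
  -- K₂ with second projection
  let g1 : catProd K2 K2 →g K2 := ⟨fun p => p.2, fun {p q} h => h.2⟩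
  obtain ⟨gb1, hgb1, _⟩ := hP (Fin 2) K2 g1
  have hev1 : ∀ x a, ev (gb1 x, a) = a := fun x a => DFunLike.congr_fun hgb1 (x, a)
  have hconst : ∀ x : Fin 2, gb1 x = gb0 () := by
    intro x
    have h := huniq0 ⟨fun _ => gb1 x, fun {p q} h => absurd h (by simp)⟩
      (DFunLike.ext _ _ fun p => hev1 x p.2)
    exact DFunLike.congr_fun h ()
  have hadj : E.Adj (gb1 0) (gb1 1) := gb1.map_rel (by simp [K2])
  rw [hconst 0, hconst 1] at hadj
  exact E.irrefl hadj
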